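/- arXiv:1808.03527 — 2 statements merged into one kernel-verified Lean document; each statement's English description precedes it below -/
import Mathlib

section
/- Let M be a closed Riemannian manifold, h : M → ℝ a bounded measurable function with sup |h| = c, and suppose ∫_M h ≥ 0. Then for every L > 0, the infimum of the perimeter M(∂Ω) over all Caccioppoli sets Ω ⊆ M satisfying A^h(Ω) := M(∂Ω) − ∫_Ω h ≥ L is strictly positive. -/
open MeasureTheory Filter Topology

lemma stmt0_aux {M : Type*} [MeasurableSpace M] (μ : Measure M) [IsFiniteMeasure μ]
    (h : M → ℝ) (c : ℝ) (hc : ∀ x, |h x| ≤ c) (hmeas : Measurable h)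
    (A B : Set M) (hA : MeasurableSet A) (hB : MeasurableSet B) :
    |∫ x in A, h x ∂μ - ∫ x in B, h x ∂μ| ≤ c * (μ (symmDiff A B)).toReal := by
  have hint : Integrable h μ :=
    ⟨hmeas.aestronglyMeasurable,
      HasFiniteIntegral.of_bounded (C := c) (ae_of_all _ fun x => by simpa using hc x)⟩
  rw [← integral_indicator hA, ← integral_indicator hB,
    ← integral_sub (hint.indicator hA) (hint.indicator hB)]
  have hΔ : MeasurableSet (symmDiff A B) := hA.symmDiff hB
  calc |∫ x, (A.indicator h x - B.indicator h x) ∂μ|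
      ≤ ∫ x, ‖A.indicator h x - B.indicator h x‖ ∂μ := by
        exact (Real.norm_eq_abs _) ▸ norm_integral_le_integral_norm _
    _ ≤ ∫ x, (symmDiff A B).indicator (fun _ => c) x ∂μ := by
        apply integral_mono ((hint.indicator hA).sub (hint.indicator hB)).norm
          ((integrable_const c).indicator hΔ)
        intro x
        by_cases hxA : x ∈ A <;> by_cases hxB : x ∈ B <;>
          simp [Set.indicator_apply, hxA, hxB, Set.mem_symmDiff, Real.norm_eq_abs,
            abs_nonneg, hc x, abs_le.mp (hc x), (abs_nonneg (h x)).trans (hc x)]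
    _ = c * (μ (symmDiff A B)).toReal := by
        rw [integral_indicator_const _ hΔ, smul_eq_mul, mul_comm]; rfl

/-- Let `M` be a closed Riemannian manifold (abstracted here as a finite
measure space with volume measure `μ`), `h : M → ℝ` a bounded measurable function with
`|h| ≤ c`, and suppose `∫_M h ≥ 0`.  Caccioppoli sets are modelled by a predicate `Cacc` with
perimeter functional `per`; the standard facts (compactness + lower semicontinuity of
perimeter under `L¹` convergence, and the constancy theorem) are supplied as hypotheses.
Then for every `L > 0`, the infimum of the perimeter `per Ω` over all Caccioppoli sets `Ω`
with `A^h(Ω) = per Ω − ∫_Ω h ≥ L` is strictly positive. -/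
theorem stmt0 {M : Type*} [MeasurableSpace M]
    (μ : Measure M) [IsFiniteMeasure μ]
    (Cacc : Set M → Prop) (per : Set M → ℝ)
    (h : M → ℝ) (c : ℝ) (hc : ∀ x, |h x| ≤ c) (hmeas : Measurable h)
    (hint : 0 ≤ ∫ x, h x ∂μ)
    (hCmeas : ∀ Ω, Cacc Ω → MeasurableSet Ω)
    (hpernn : ∀ Ω, Cacc Ω → 0 ≤ per Ω)
    -- compactness of sets of finite perimeter together with
    -- lower semicontinuity of the perimeter under L¹ convergence
    (hcompact : ∀ Ω : ℕ → Set M, (∀ i, Cacc (Ω i)) → (∃ B, ∀ i, per (Ω i) ≤ B) →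
      ∃ (φ : ℕ → ℕ) (Ωlim : Set M), StrictMono φ ∧ Cacc Ωlim ∧
        Tendsto (fun i => μ (symmDiff (Ω (φ i)) Ωlim)) atTop (𝓝 0) ∧
        per Ωlim ≤ Filter.liminf (fun i => per (Ω (φ i))) atTop)
    -- constancy theorem: zero perimeter forces `Ω = ∅` or `Ω = M` up to measure zero
    (hconst : ∀ Ω, Cacc Ω → per Ω = 0 → μ Ω = 0 ∨ μ Ωᶜ = 0)
    (L : ℝ) (hL : 0 < L) :
    ∃ η > 0, ∀ Ω, Cacc Ω → L ≤ per Ω - ∫ x in Ω, h x ∂μ → η ≤ per Ω := by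
  by_contra hcon
  push_neg at hcon
  have H : ∀ n : ℕ, ∃ Ω, Cacc Ω ∧ L ≤ per Ω - ∫ x in Ω, h x ∂μ ∧
      per Ω < 1 / (n + 1) := by
    intro n
    obtain ⟨Ω, h1, h2, h3⟩ := hcon (1 / (n + 1)) (by positivity)
    exact ⟨Ω, h1, h2, h3⟩
  choose Ω hCΩ hAΩ hPΩ using H
  obtain ⟨φ, Ωlim, hφ, hClim, htend, hlsc⟩ := hcompact Ω hCΩ
    ⟨1, fun i => (hPΩ i).le.trans (by
      rw [div_le_one (by positivity)]; linarith [Nat.cast_nonneg (α := ℝ) i])⟩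
  -- perimeters along the subsequence tend to 0
  have hbound : ∀ i : ℕ, per (Ω (φ i)) ≤ 1 / (i + 1) := by
    intro i
    refine (hPΩ (φ i)).le.trans ?_
    apply one_div_le_one_div_of_le (by positivity)
    have : (i : ℝ) ≤ φ i := Nat.cast_le.mpr hφ.le_apply
    linarith
  have htend0 : Tendsto (fun i => per (Ω (φ i))) atTop (𝓝 0) := by
    apply squeeze_zero (fun i => hpernn _ (hCΩ (φ i))) hbound
    exact tendsto_one_div_add_atTop_nhds_zero_nat
  have hper0 : per Ωlim = 0 :=
    le_antisymm (hlsc.trans_eq htend0.liminf_eq) (hpernn _ hClim)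
  -- integrals converge
  have hc' : ∀ x, |h x| ≤ max c 0 := fun x => (hc x).trans (le_max_left _ _)
  have htendR : Tendsto (fun i => (μ (symmDiff (Ω (φ i)) Ωlim)).toReal) atTop (𝓝 0) := by
    have := (ENNReal.tendsto_toReal (a := 0) (by simp)).comp htend
    simpa [Function.comp_def] using this
  have hintconv : Tendsto (fun i => ∫ x in Ω (φ i), h x ∂μ)
      atTop (𝓝 (∫ x in Ωlim, h x ∂μ)) := by
    rw [← tendsto_sub_nhds_zero_iff]
    refine squeeze_zero_norm
      (fun i => stmt0_aux μ h (max c 0) hc' hmeas _ _ (hCmeas _ (hCΩ (φ i))) (hCmeas _ hClim))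
      (by simpa using htendR.const_mul (max c 0))
  -- the limiting integral is ≤ -L
  have hIle : (∫ x in Ωlim, h x ∂μ) ≤ -L := by
    have hlim : Tendsto (fun i : ℕ => -L + 1 / (i + 1)) atTop (𝓝 (-L)) := by
      simpa using (tendsto_const_nhds (x := -L)).add
        tendsto_one_div_add_atTop_nhds_zero_nat
    apply le_of_tendsto_of_tendsto' hintconv hlim
    intro i
    have := hAΩ (φ i)
    have hb := hbound i
    linarith
  -- but constancy forces the limiting integral to be ≥ 0
  have hIge : 0 ≤ ∫ x in Ωlim, h x ∂μ := by
    rcases hconst Ωlim hClim hper0 with h0 | h0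
    · have hr : μ.restrict Ωlim = 0 := by
        simpa [Measure.restrict_eq_zero] using h0
      simp [hr]
    · have hintg : Integrable h μ :=
        ⟨hmeas.aestronglyMeasurable,
          HasFiniteIntegral.of_bounded (C := max c 0) (ae_of_all _ fun x => by
            simpa using hc' x)⟩
      have hadd := integral_add_compl (hCmeas _ hClim) hintg
      have hr : μ.restrict Ωlimᶜ = 0 := by
        simpa [Measure.restrict_eq_zero] using h0
      rw [hr, integral_zero_measure] at hadd
      linarith [hint.trans_eq hadd.symm]
  linarith
end

section
/- Let V, V* be n-varifolds in a closed manifold M such that V* ⌊(M∖K) = V ⌊(M∖K) for a compact set K, and suppose V* = lim_i |∂Ω_i*|, V = lim_i |∂Ω_i| as varifolds, where for each i: Ω_i △ Ω_i* ⊆ K and A^h(Ω_i) − ε_i ≤ A^h(Ω_i*) ≤ A^h(Ω_i) with ε_i → 0, sup|h| = c. Then |‖V‖(M) − ‖V*‖(M)| ≤ c·vol(K). -/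
open MeasureTheory Filter Topology

private theorem abs_integral_le_integral_abs_aux {M : Type*} [MeasurableSpace M]
    {μ : Measure M} (f : M → ℝ) : |∫ x, f x ∂μ| ≤ ∫ x, |f x| ∂μ := by
  simpa using norm_integral_le_integral_norm f (μ := μ)

/-- replacement mass-defect estimate.  Let `V, V*` be `n`-varifolds in a
closed manifold `M` (a finite measure space) with `V* = lim |∂Ω_i*|`, `V = lim |∂Ω_i|` as
varifolds, so that the total masses converge: `M(∂Ω_i) → ‖V‖(M)` and `M(∂Ω_i*) → ‖V*‖(M)`.
Suppose for each `i`: `Ω_i △ Ω_i* ⊆ K` for a (compact) set `K`, and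
`A^h(Ω_i) − ε_i ≤ A^h(Ω_i*) ≤ A^h(Ω_i)` with `ε_i → 0` and `sup|h| ≤ c`.  Then
`|‖V‖(M) − ‖V*‖(M)| ≤ c · vol(K)`. -/
theorem stmt12 {M : Type*} [MeasurableSpace M] (μ : Measure M) [IsFiniteMeasure μ]
    (h : M → ℝ) (c : ℝ) (hc : ∀ x, |h x| ≤ c) (hmeas : Measurable h)
    (K : Set M) (hK : MeasurableSet K)
    (Ω Ωstar : ℕ → Set M)
    (hΩm : ∀ i, MeasurableSet (Ω i)) (hΩstarm : ∀ i, MeasurableSet (Ωstar i))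
    (per perstar : ℕ → ℝ) (mV mVstar : ℝ) (ε : ℕ → ℝ)
    (hsymm : ∀ i, symmDiff (Ω i) (Ωstar i) ⊆ K)
    (hA : ∀ i,
      (per i - ∫ x in Ω i, h x ∂μ) - ε i
          ≤ perstar i - ∫ x in Ωstar i, h x ∂μ ∧
      perstar i - ∫ x in Ωstar i, h x ∂μ
          ≤ per i - ∫ x in Ω i, h x ∂μ)
    (hε : Tendsto ε atTop (𝓝 0))
    (hper : Tendsto per atTop (𝓝 mV))
    (hperstar : Tendsto perstar atTop (𝓝 mVstar)) :
    |mV - mVstar| ≤ c * (μ K).toReal := by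
  rcases isEmpty_or_nonempty M with hE | hN
  · -- empty case: everything is zero
    have hμ : μ = 0 := μ.eq_zero_of_isEmpty
    have hint : ∀ i, (∫ x in Ω i, h x ∂μ) = 0 := by
      intro i; simp [hμ]
    have h1 : mVstar ≤ mV := by
      refine le_of_tendsto_of_tendsto' hperstar hper fun i => ?_
      have := (hA i).2
      rw [hint, hμ] at this
      simpa using this
    have h2 : mV ≤ mVstar := by
      refine le_of_tendsto_of_tendsto' (by simpa using hper.sub hε : Tendsto (fun i => per i - ε i) atTop (𝓝 mV)) hperstar fun i => ?_
      have := (hA i).1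
      rw [hint, hμ] at this
      simpa using this
    have : mV = mVstar := le_antisymm h2 h1
    simp [this, hμ]
  · have hc0 : 0 ≤ c := le_trans (abs_nonneg _) (hc (Classical.arbitrary M))
    have hint : Integrable h μ := by
      refine (integrable_const c).mono' hmeas.aestronglyMeasurable ?_
      exact Filter.Eventually.of_forall fun x => by simpa using hc x
    -- bound on the difference of set integrals
    have hD : ∀ i, |(∫ x in Ω i, h x ∂μ) - ∫ x in Ωstar i, h x ∂μ| ≤ c * (μ K).toReal := by
      intro i
      have hf1 : Integrable ((Ω i).indicator h) μ := hint.indicator (hΩm i)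
      have hf2 : Integrable ((Ωstar i).indicator h) μ := hint.indicator (hΩstarm i)
      have hptwise : ∀ x, |(Ω i).indicator h x - (Ωstar i).indicator h x|
          ≤ K.indicator (fun _ => c) x := by
        intro x
        by_cases hx1 : x ∈ Ω i <;> by_cases hx2 : x ∈ Ωstar i
        · simp only [Set.indicator_of_mem hx1, Set.indicator_of_mem hx2, sub_self, abs_zero]
          exact Set.indicator_nonneg (fun _ _ => hc0) x
        · have hxK : x ∈ K := hsymm i (Set.mem_symmDiff.2 (Or.inl ⟨hx1, hx2⟩))
          simp only [Set.indicator_of_mem hx1, Set.indicator_of_notMem hx2,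
            Set.indicator_of_mem hxK, sub_zero]
          exact hc x
        · have hxK : x ∈ K := hsymm i (Set.mem_symmDiff.2 (Or.inr ⟨hx2, hx1⟩))
          simp only [Set.indicator_of_notMem hx1, Set.indicator_of_mem hx2,
            Set.indicator_of_mem hxK, zero_sub, abs_neg]
          exact hc x
        · simp only [Set.indicator_of_notMem hx1, Set.indicator_of_notMem hx2, sub_self,
            abs_zero]
          exact Set.indicator_nonneg (fun _ _ => hc0) x
      rw [← integral_indicator (hΩm i), ← integral_indicator (hΩstarm i),
        ← integral_sub hf1 hf2]
      calc |∫ x, ((Ω i).indicator h x - (Ωstar i).indicator h x) ∂μ|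
          ≤ ∫ x, |(Ω i).indicator h x - (Ωstar i).indicator h x| ∂μ :=
            abs_integral_le_integral_abs_aux _
        _ ≤ ∫ x, K.indicator (fun _ => c) x ∂μ := by
            refine integral_mono (hf1.sub hf2).abs ((integrable_const c).indicator hK) hptwise
        _ = c * (μ K).toReal := by
            rw [integral_indicator hK, setIntegral_const, smul_eq_mul, mul_comm]; rfl
    have key : ∀ i, |per i - perstar i| ≤ c * (μ K).toReal + |ε i| := by
      intro i
      obtain ⟨h1, h2⟩ := hA i
      set D := (∫ x in Ω i, h x ∂μ) - ∫ x in Ωstar i, h x ∂μ with hDdef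
      have hub : per i - perstar i ≤ D + ε i := by linarith
      have hlb : D ≤ per i - perstar i := by linarith
      have hDb := hD i
      rw [abs_le]
      constructor
      · have := neg_abs_le D
        calc -(c * (μ K).toReal + |ε i|) ≤ -|D| := by
              have := abs_nonneg (ε i); linarith [abs_le.mp hDb]
          _ ≤ D := neg_abs_le D
          _ ≤ per i - perstar i := hlb
      · calc per i - perstar i ≤ D + ε i := hub
          _ ≤ |D| + |ε i| := add_le_add (le_abs_self D) (le_abs_self (ε i))
          _ ≤ c * (μ K).toReal + |ε i| := by linarith
    have hlim1 : Tendsto (fun i => |per i - perstar i|) atTop (𝓝 |mV - mVstar|) :=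
      (hper.sub hperstar).abs
    have hlim2 : Tendsto (fun i => c * (μ K).toReal + |ε i|) atTop
        (𝓝 (c * (μ K).toReal)) := by
      have h2 : Tendsto (fun i => |ε i|) atTop (𝓝 0) := by
        simpa using hε.abs
      have h1 : Tendsto (fun _ : ℕ => c * (μ K).toReal) atTop (𝓝 (c * (μ K).toReal)) :=
        tendsto_const_nhds
      simpa using h1.add h2
    exact le_of_tendsto_of_tendsto' hlim1 hlim2 key
end
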